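/- Let d_n denote the minimum value of Δ_CS = C - S over all rooted binary trees with n leaves. Then d_0 = d_1 = 0, and for all n ≥ 1: d_{2n} = 2·d_n - 2n and d_{2n+1} = d_{n+1} + d_n - 2n. -/
import Mathlib


/-- Rooted binary trees: a leaf, or an internal vertex with two child subtrees. -/
inductive BTree where
  | leaf : BTree
  | node : BTree → BTree → BTree
deriving DecidableEq

namespace BTree

/-- Number of leaves of a rooted binary tree. -/
def numLeaves : BTree → ℕ
  | leaf => 1
  | node l r => numLeaves l + numLeaves r

/-- Sackin index: sum over internal vertices `v` of `n_{v_a} + n_{v_b}`. -/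
def sackin : BTree → ℕ
  | leaf => 0
  | node l r => sackin l + sackin r + (numLeaves l + numLeaves r)

/-- Colless index: sum over internal vertices `v` of `|n_{v_a} - n_{v_b}|`. -/
def colless : BTree → ℕ
  | leaf => 0
  | node l r =>
      colless l + colless r +
        (max (numLeaves l) (numLeaves r) - min (numLeaves l) (numLeaves r))

/-- `N_a`: sum over internal vertices of the larger child-subtree leaf count. -/
def Na : BTree → ℕ
  | leaf => 0
  | node l r => Na l + Na r + max (numLeaves l) (numLeaves r)

/-- `N_b`: sum over internal vertices of the smaller child-subtree leaf count. -/
def Nb : BTree → ℕ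
  | leaf => 0
  | node l r => Nb l + Nb r + min (numLeaves l) (numLeaves r)

/-- `Δ_CS = C - S`, as an integer. -/
def deltaCS (T : BTree) : ℤ := (colless T : ℤ) - (sackin T : ℤ)

/-- Caterpillar trees: every internal vertex has at least one leaf child. -/
def isCaterpillar : BTree → Prop
  | leaf => True
  | node l r => (l = leaf ∧ isCaterpillar r) ∨ (r = leaf ∧ isCaterpillar l)

/-- The fully balanced tree of height `h`. -/
def fbTree : ℕ → BTree
  | 0 => leaf
  | h + 1 => node (fbTree h) (fbTree h)

end BTree

namespace DeltaCSAux
open BTree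

/-- binary digit sum -/
def s (n : ℕ) : ℕ := (Nat.digits 2 n).sum

/-- `f n = Σ_{k < n} s k`, the maximum of `Nb` over trees with `n` leaves. -/
def f (n : ℕ) : ℕ := ∑ k ∈ Finset.range n, s k

lemma s_zero : s 0 = 0 := by simp [s]

lemma s_two_mul (k : ℕ) : s (2 * k) = s k := by
  rcases Nat.eq_zero_or_pos k with hk | hk
  · subst hk; rfl
  · unfold s
    rw [Nat.digits_def' (by norm_num : 1 < 2) (by omega)]
    simp [Nat.mul_mod_right, Nat.mul_div_cancel_left _ (by norm_num : 0 < 2)]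

lemma s_two_mul_add_one (k : ℕ) : s (2 * k + 1) = s k + 1 := by
  unfold s
  rw [Nat.digits_def' (by norm_num : 1 < 2) (by omega)]
  have h1 : (2 * k + 1) % 2 = 1 := by omega
  have h2 : (2 * k + 1) / 2 = k := by omega
  rw [h1, h2]
  simp [Nat.add_comm]

lemma one_le_s : ∀ b, 1 ≤ b → 1 ≤ s b := by
  intro b
  induction b using Nat.strong_induction_on with
  | _ b ih =>
    intro hb
    rcases Nat.even_or_odd b with ⟨b', hb'⟩ | ⟨b', hb'⟩
    · have hb2 : b = 2 * b' := by omega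
      subst hb2
      rw [s_two_mul]
      exact ih b' (by omega) (by omega)
    · have hb2 : b = 2 * b' + 1 := by omega
      subst hb2
      rw [s_two_mul_add_one]
      omega

lemma f_zero : f 0 = 0 := rfl

lemma f_succ (n : ℕ) : f (n + 1) = f n + s n := Finset.sum_range_succ _ _

lemma f_one : f 1 = 0 := by rw [f_succ, f_zero, s_zero]

lemma f_two_mul (n : ℕ) : f (2 * n) = 2 * f n + n := by
  induction n with
  | zero => rfl
  | succ n ih =>
    have h : 2 * (n + 1) = 2 * n + 1 + 1 := by ring
    rw [h, f_succ, f_succ, ih, s_two_mul, s_two_mul_add_one, f_succ]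
    ring

lemma f_two_mul_add_one (n : ℕ) : f (2 * n + 1) = f (n + 1) + f n + n := by
  rw [f_succ, f_two_mul, s_two_mul, f_succ]
  ring

/-- Key superadditivity lemma. -/
lemma key (m : ℕ) : ∀ a b, a + b = m → 1 ≤ a → a ≤ b → f a + f b + a ≤ f (a + b) := by
  induction m using Nat.strong_induction_on with
  | _ m ih =>
    intro a b hab ha hle
    rcases eq_or_lt_of_le ha with h1 | h2
    · -- a = 1
      have ha1 : a = 1 := h1.symm
      subst ha1
      have : 1 + b = b + 1 := by ring
      rw [this, f_succ b, f_one]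
      have := one_le_s b (by omega)
      omega
    · rcases Nat.even_or_odd a with ⟨a', ha'⟩ | ⟨a', ha'⟩ <;>
        rcases Nat.even_or_odd b with ⟨b', hb'⟩ | ⟨b', hb'⟩
      · -- even, even
        have hA : a = 2 * a' := by omega
        have hB : b = 2 * b' := by omega
        have h := ih (a' + b') (by omega) a' b' rfl (by omega) (by omega)
        have hg : a + b = 2 * (a' + b') := by omega
        rw [hg, f_two_mul, hA, hB, f_two_mul, f_two_mul]
        omega
      · -- even, odd
        have hA : a = 2 * a' := by omega
        have hB : b = 2 * b' + 1 := by omega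
        have hb1 : 1 ≤ b' := by omega
        have h1 := ih (a' + b' + 1) (by omega) a' (b' + 1) rfl (by omega) (by omega)
        have h2 := ih (a' + b') (by omega) a' b' rfl (by omega) (by omega)
        have hg : a + b = 2 * (a' + b') + 1 := by omega
        rw [hg, f_two_mul_add_one, hA, hB, f_two_mul, f_two_mul_add_one]
        have he : a' + b' + 1 = a' + (b' + 1) := by ring
        rw [← he] at h1
        omega
      · -- odd, even
        have hA : a = 2 * a' + 1 := by omega
        have hB : b = 2 * b' := by omega
        have ha1 : 1 ≤ a' := by omega
        have hab' : a' + 1 ≤ b' := by omega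
        have h1 := ih (a' + 1 + b') (by omega) (a' + 1) b' rfl (by omega) (by omega)
        have h2 := ih (a' + b') (by omega) a' b' rfl (by omega) (by omega)
        have hg : a + b = 2 * (a' + b') + 1 := by omega
        rw [hg, f_two_mul_add_one, hA, hB, f_two_mul_add_one, f_two_mul]
        have he : a' + 1 + b' = a' + b' + 1 := by ring
        rw [he] at h1
        omega
      · -- odd, odd
        have hA : a = 2 * a' + 1 := by omega
        have hB : b = 2 * b' + 1 := by omega
        have ha1 : 1 ≤ a' := by omega
        have hab' : a' ≤ b' := by omega
        have h1 := ih (a' + (b' + 1)) (by omega) a' (b' + 1) rfl (by omega) (by omega)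
        have h2 : f (a' + 1) + f b' + a' ≤ f (a' + b' + 1) := by
          rcases le_or_gt (a' + 1) b' with hc | hc
          · have := ih (a' + 1 + b') (by omega) (a' + 1) b' rfl (by omega) hc
            have he : a' + 1 + b' = a' + b' + 1 := by ring
            rw [he] at this
            omega
          · have hb'a : b' = a' := by omega
            have := ih (b' + (a' + 1)) (by omega) b' (a' + 1) rfl (by omega) (by omega)
            have he : b' + (a' + 1) = a' + b' + 1 := by omega
            rw [he] at this
            omega
        have he1 : a' + (b' + 1) = a' + b' + 1 := by ring
        rw [he1] at h1
        have hg : a + b = 2 * (a' + b' + 1) := by omega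
        rw [hg, f_two_mul, hA, hB, f_two_mul_add_one, f_two_mul_add_one]
        omega

lemma numLeaves_pos (T : BTree) : 1 ≤ T.numLeaves := by
  induction T with
  | leaf => simp [numLeaves]
  | node l r ihl ihr => simp only [numLeaves]; omega

lemma colless_eq (T : BTree) : (colless T : ℤ) = (Na T : ℤ) - (Nb T : ℤ) := by
  induction T with
  | leaf => simp [colless, Na, Nb]
  | node l r ihl ihr =>
    simp only [colless, Na, Nb]
    rcases le_total (numLeaves l) (numLeaves r) with h | h
    · rw [max_eq_right h, min_eq_left h]
      push_cast [Nat.cast_sub h]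
      omega
    · rw [max_eq_left h, min_eq_right h]
      push_cast [Nat.cast_sub h]
      omega

lemma sackin_eq (T : BTree) : sackin T = Na T + Nb T := by
  induction T with
  | leaf => rfl
  | node l r ihl ihr =>
    simp only [sackin, Na, Nb]
    rcases le_total (numLeaves l) (numLeaves r) with h | h
    · rw [max_eq_right h, min_eq_left h]; omega
    · rw [max_eq_left h, min_eq_right h]; omega

lemma deltaCS_eq (T : BTree) : deltaCS T = -2 * (Nb T : ℤ) := by
  unfold deltaCS
  rw [colless_eq, sackin_eq]
  push_cast
  ring

lemma Nb_le (T : BTree) : Nb T ≤ f (numLeaves T) := by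
  induction T with
  | leaf => simp [Nb, numLeaves, f_one]
  | node l r ihl ihr =>
    simp only [Nb, numLeaves]
    have hl := numLeaves_pos l
    have hr := numLeaves_pos r
    rcases le_total (numLeaves l) (numLeaves r) with h | h
    · rw [min_eq_left h]
      have := key (numLeaves l + numLeaves r) (numLeaves l) (numLeaves r) rfl hl h
      omega
    · rw [min_eq_right h]
      have := key (numLeaves r + numLeaves l) (numLeaves r) (numLeaves l) rfl hr h
      have he : numLeaves r + numLeaves l = numLeaves l + numLeaves r := by ring
      rw [he] at this
      omega

/-- A maximally balanced tree with `n` leaves (for `n ≥ 1`). -/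
def mb : ℕ → BTree
  | 0 => BTree.leaf
  | 1 => BTree.leaf
  | n + 2 => BTree.node (mb ((n + 3) / 2)) (mb ((n + 2) / 2))
  decreasing_by all_goals omega

lemma mb_leaves : ∀ n, 1 ≤ n → numLeaves (mb n) = n := by
  intro n
  induction n using Nat.strong_induction_on with
  | _ n ih =>
    intro hn
    match n, hn with
    | 1, _ => simp [mb, numLeaves]
    | (n + 2), _ =>
      rw [mb]
      simp only [numLeaves]
      rw [ih ((n + 3) / 2) (by omega) (by omega), ih ((n + 2) / 2) (by omega) (by omega)]
      omega

lemma mb_Nb : ∀ n, 1 ≤ n → Nb (mb n) = f n := by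
  intro n
  induction n using Nat.strong_induction_on with
  | _ n ih =>
    intro hn
    match n, hn with
    | 1, _ => simp [mb, Nb, f_one]
    | (n + 2), _ =>
      rw [mb]
      simp only [Nb]
      rw [mb_leaves ((n + 3) / 2) (by omega), mb_leaves ((n + 2) / 2) (by omega),
        ih ((n + 3) / 2) (by omega) (by omega), ih ((n + 2) / 2) (by omega) (by omega)]
      have hmin : min ((n + 3) / 2) ((n + 2) / 2) = (n + 2) / 2 := by
        apply min_eq_right; omega
      rw [hmin]
      rcases Nat.even_or_odd n with ⟨m, hm⟩ | ⟨m, hm⟩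
      · have h1 : (n + 3) / 2 = m + 1 := by omega
        have h2 : (n + 2) / 2 = m + 1 := by omega
        have h3 : n + 2 = 2 * (m + 1) := by omega
        rw [h1, h2, h3, f_two_mul]
        ring
      · have h1 : (n + 3) / 2 = m + 2 := by omega
        have h2 : (n + 2) / 2 = m + 1 := by omega
        have h3 : n + 2 = 2 * (m + 1) + 1 := by omega
        rw [h1, h2, h3, f_two_mul_add_one]

end DeltaCSAux

open BTree in
/-- the minimum `d_n` of `Δ_CS` over trees with `n` leaves (with the
convention `d_0 = 0` for the empty tree) satisfies `d_1 = 0`,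
`d_{2n} = 2d_n - 2n` and `d_{2n+1} = d_{n+1} + d_n - 2n` for all `n ≥ 1`. -/
theorem deltaCS_min_recursion (d : ℕ → ℤ) (h0 : d 0 = 0)
    (hmin : ∀ n : ℕ, 1 ≤ n →
      IsLeast {x : ℤ | ∃ T : BTree, numLeaves T = n ∧ deltaCS T = x} (d n)) :
    d 1 = 0 ∧ ∀ n : ℕ, 1 ≤ n →
      d (2 * n) = 2 * d n - 2 * (n : ℤ) ∧
      d (2 * n + 1) = d (n + 1) + d n - 2 * (n : ℤ) := by
  open DeltaCSAux in
  have hd : ∀ n, 1 ≤ n → d n = -2 * (f n : ℤ) := by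
    intro n hn
    obtain ⟨⟨T, hT, hTd⟩, hlb⟩ := hmin n hn
    have h1 : d n ≤ -2 * (f n : ℤ) :=
      hlb ⟨mb n, mb_leaves n hn, by rw [deltaCS_eq, mb_Nb n hn]⟩
    have h2 : -2 * (f n : ℤ) ≤ d n := by
      rw [← hTd, deltaCS_eq]
      have hle : Nb T ≤ f n := by
        have := Nb_le T
        rwa [hT] at this
      have : (Nb T : ℤ) ≤ (f n : ℤ) := by exact_mod_cast hle
      linarith
    linarith
  constructor
  · have := hd 1 le_rfl
    rw [f_one] at this
    simpa using this
  · intro n hn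
    have r1 := hd n hn
    have r2 := hd (2 * n) (by omega)
    have r3 := hd (2 * n + 1) (by omega)
    have r4 := hd (n + 1) (by omega)
    rw [f_two_mul] at r2
    rw [f_two_mul_add_one] at r3
    constructor
    · rw [r2, r1]; push_cast; ring
    · rw [r3, r1, r4]; push_cast; ring
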